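/- Let p, q, r, s be real pulses of length 2Mκ such that each is either symmetric (x[n] = x[2Mκ−n+1]) or anti-symmetric (x[n] = −x[2Mκ−n+1]), with symmetry indicator s(x) ∈ {0,1} (0 for symmetric, 1 for anti-symmetric). Then (−1)^{s(p)}[η⁺(p,q,r,s) − η⁻(p,q,r,s)] + (−1)^{s(r)}[η⁺(r,q,p,s) − η⁻(r,q,p,s)] = 0; in particular, when p = r, η⁺(p,q,p,s) = η⁻(p,q,p,s). -/

import Mathlib

open Matrix Finset

/-- The `n × n` exchange (anti-identity) matrix `J_n`. -/
def Jmat (n : ℕ) : Matrix (Fin n) (Fin n) ℝ :=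
  fun i j => if (i : ℕ) + (j : ℕ) = n - 1 then 1 else 0

/-- Row-wise convolution: each row of `A` convolved with the corresponding row of `B`,
producing rows of length `2κ − 1`. -/
def rowConv {m κ : ℕ} (A B : Matrix (Fin m) (Fin κ) ℝ) :
    Matrix (Fin m) (Fin (2 * κ - 1)) ℝ :=
  fun i k => ∑ a : Fin κ, ∑ b : Fin κ,
    if (a : ℕ) + (b : ℕ) = (k : ℕ) then A i a * B i b else 0

/-- The matrix `J₂ ⊗ I_M`, acting on `2M` rows by swapping the two halves. -/
def swapHalves (M : ℕ) : Matrix (Fin (2 * M)) (Fin (2 * M)) ℝ :=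
  fun i j => if ((i : ℕ) + M) % (2 * M) = (j : ℕ) then 1 else 0

/-- The matrix `U^ε = I₂ ⊗ (I_M + ε J_M)` (for `ε = 1` this is `U⁺`, for `ε = -1` it is `U⁻`). -/
def Umat (M : ℕ) (ε : ℝ) : Matrix (Fin (2 * M)) (Fin (2 * M)) ℝ :=
  fun i j => (if i = j then (1 : ℝ) else 0) +
    ε * (if (i : ℕ) / M = (j : ℕ) / M ∧ (i : ℕ) % M + (j : ℕ) % M = M - 1 then 1 else 0)

/-- `ℛ(P,Q) = P ⊛ (J_{2M} Q)`. -/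
def Rcal {M κ : ℕ} (P Q : Matrix (Fin (2 * M)) (Fin κ) ℝ) :
    Matrix (Fin (2 * M)) (Fin (2 * κ - 1)) ℝ :=
  rowConv P (Jmat (2 * M) * Q)

/-- `𝒮(P,Q) = ((J₂ ⊗ I_M) P) ⊛ (J_{2M} Q)`. -/
def Scal {M κ : ℕ} (P Q : Matrix (Fin (2 * M)) (Fin κ) ℝ) :
    Matrix (Fin (2 * M)) (Fin (2 * κ - 1)) ℝ :=
  rowConv (swapHalves M * P) (Jmat (2 * M) * Q)

/-- `η` with sign `ε`:
`η^ε(P,Q,R,S) = (1/(2M)) tr[U^ε ℛ(P,Q) ℛ(R,S)ᵀ + U^{-ε} 𝒮(P,Q) 𝒮(R,S)ᵀ]`.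
For `ε = 1` this is the quantity `η^{(+,-)}` (with `U⁺` on `ℛ` and `U⁻` on `𝒮`);
for `ε = -1` it is `η^{(-,+)}`. -/
noncomputable def etaSign {M κ : ℕ} (ε : ℝ) (P Q R S : Matrix (Fin (2 * M)) (Fin κ) ℝ) : ℝ :=
  (1 / (2 * (M : ℝ))) *
    Matrix.trace (Umat M ε * Rcal P Q * (Rcal R S)ᵀ + Umat M (-ε) * Scal P Q * (Scal R S)ᵀ)

/-- Arrange a pulse of length `2Mκ` into a `2M × κ` matrix column by column. -/
def toMat (M κ : ℕ) (p : Fin (2 * M * κ) → ℝ) : Matrix (Fin (2 * M)) (Fin κ) ℝ :=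
  fun i k => p ⟨(k : ℕ) * (2 * M) + (i : ℕ), by
    have h1 := i.isLt
    have h2 := k.isLt
    calc (k : ℕ) * (2 * M) + (i : ℕ) < ((k : ℕ) + 1) * (2 * M) := by
          rw [Nat.add_mul, Nat.one_mul]; omega
      _ ≤ κ * (2 * M) := Nat.mul_le_mul_right _ h2
      _ = 2 * M * κ := Nat.mul_comm _ _⟩

/-- The `2M × (2κ−1)` matrix which is zero everywhere except for its central column
(column index `κ − 1`), which is filled with ones. -/
def centralCol (M κ : ℕ) : Matrix (Fin (2 * M)) (Fin (2 * κ - 1)) ℝ :=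
  fun _ k => if (k : ℕ) = κ - 1 then 1 else 0

/-- A pulse is symmetric in the time domain: `p[n] = p[2Mκ − n + 1]` (1-indexed). -/
def IsSymmetricPulse {L : ℕ} (p : Fin L → ℝ) : Prop := ∀ n : Fin L, p n = p n.rev

/-- A pulse is anti-symmetric in the time domain: `p[n] = −p[2Mκ − n + 1]` (1-indexed). -/
def IsAntisymmetricPulse {L : ℕ} (p : Fin L → ℝ) : Prop := ∀ n : Fin L, p n = -p n.rev


def sigF (M : ℕ) (i : Fin (2 * M)) : Fin (2 * M) :=
  ⟨if (i : ℕ) < M then M - 1 - (i : ℕ) else 3 * M - 1 - (i : ℕ), by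
    have := i.isLt; split <;> omega⟩

def tauF (M : ℕ) (i : Fin (2 * M)) : Fin (2 * M) :=
  ⟨if (i : ℕ) < M then (i : ℕ) + M else (i : ℕ) - M, by
    have := i.isLt; split <;> omega⟩

def rhoF (M : ℕ) (i : Fin (2 * M)) : Fin (2 * M) :=
  ⟨2 * M - 1 - (i : ℕ), by have := i.isLt; omega⟩

lemma rho_sig {M : ℕ} (i : Fin (2 * M)) : rhoF M (sigF M i) = tauF M i := by
  have := i.isLt; apply Fin.ext; simp only [rhoF, sigF, tauF]; split_ifs <;> omega

lemma tau_sig {M : ℕ} (i : Fin (2 * M)) : tauF M (sigF M i) = rhoF M i := by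
  have := i.isLt; apply Fin.ext; simp only [rhoF, sigF, tauF]; split_ifs <;> omega

lemma rho_rho {M : ℕ} (i : Fin (2 * M)) : rhoF M (rhoF M i) = i := by
  have := i.isLt; apply Fin.ext; simp only [rhoF]; omega

lemma rho_tau {M : ℕ} (i : Fin (2 * M)) : rhoF M (tauF M i) = sigF M i := by
  have := i.isLt; apply Fin.ext; simp only [rhoF, sigF, tauF]; split_ifs <;> omega
lemma Jmat_mul {M κ : ℕ} (Q : Matrix (Fin (2 * M)) (Fin κ) ℝ) (i : Fin (2 * M)) (b : Fin κ) :
    (Jmat (2 * M) * Q) i b = Q (rhoF M i) b := by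
  have hi := i.isLt
  rw [Matrix.mul_apply, Finset.sum_eq_single (rhoF M i)]
  · have : Jmat (2 * M) i (rhoF M i) = 1 := by
      simp only [Jmat, rhoF]; exact if_pos (by omega)
    rw [this, one_mul]
  · intro j _ hj
    have : Jmat (2 * M) i j = 0 := by
      simp only [Jmat]; rw [if_neg]
      intro h; exact hj (by apply Fin.ext; simp only [rhoF]; omega)
    rw [this, zero_mul]
  · simp

lemma swap_mul {M κ : ℕ} (P : Matrix (Fin (2 * M)) (Fin κ) ℝ) (i : Fin (2 * M)) (a : Fin κ) :
    (swapHalves M * P) i a = P (tauF M i) a := by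
  have hi := i.isLt
  have hmod : ((i : ℕ) + M) % (2 * M) = ((tauF M i : Fin (2 * M)) : ℕ) := by
    simp only [tauF]; split_ifs with h
    · exact Nat.mod_eq_of_lt (by omega)
    · rw [show (i : ℕ) + M = ((i : ℕ) - M) + 2 * M by omega, Nat.add_mod_right]
      exact Nat.mod_eq_of_lt (by omega)
  rw [Matrix.mul_apply, Finset.sum_eq_single (tauF M i)]
  · have : swapHalves M i (tauF M i) = 1 := by
      simp only [swapHalves]; rw [if_pos hmod]
    rw [this, one_mul]
  · intro j _ hj
    have : swapHalves M i j = 0 := by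
      simp only [swapHalves]; rw [if_neg]
      intro h; exact hj (by apply Fin.ext; omega)
    rw [this, zero_mul]
  · simp
lemma Umat_cond {M : ℕ} (i l : Fin (2 * M)) :
    ((i : ℕ) / M = (l : ℕ) / M ∧ (i : ℕ) % M + (l : ℕ) % M = M - 1) ↔ l = sigF M i := by
  have hi := i.isLt; have hl := l.isLt
  have hM : 0 < M := by omega
  have d1 : ∀ j : Fin (2 * M), (j : ℕ) / M = if (j : ℕ) < M then 0 else 1 := by
    intro j; have hj := j.isLt; split_ifs with h
    · exact Nat.div_eq_of_lt h
    · rw [show (j : ℕ) = ((j : ℕ) - M) + M by omega, Nat.add_div_right _ hM,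
        Nat.div_eq_of_lt (show (j : ℕ) - M < M by omega)]
  have m1 : ∀ j : Fin (2 * M), (j : ℕ) % M = if (j : ℕ) < M then (j : ℕ) else (j : ℕ) - M := by
    intro j; have hj := j.isLt; split_ifs with h
    · exact Nat.mod_eq_of_lt h
    · rw [Nat.mod_eq_sub_mod (show M ≤ (j : ℕ) by omega)]
      exact Nat.mod_eq_of_lt (by omega)
  rw [d1 i, d1 l, m1 i, m1 l, Fin.ext_iff]
  simp only [sigF]
  split_ifs <;> simp only [true_and, and_true, false_and, and_false, false_iff, true_iff,
    Nat.zero_ne_one, Nat.one_ne_zero] <;> omega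

lemma Umat_apply {M : ℕ} (ε : ℝ) (i l : Fin (2 * M)) :
    Umat M ε i l = (if i = l then (1 : ℝ) else 0) + ε * (if l = sigF M i then 1 else 0) := by
  simp only [Umat, Umat_cond]

lemma trace_Umat {M n : ℕ} (ε : ℝ) (X Y : Matrix (Fin (2 * M)) (Fin n) ℝ) :
    Matrix.trace (Umat M ε * X * Yᵀ)
      = (∑ i, ∑ k, X i k * Y i k) + ε * ∑ i, ∑ k, X (sigF M i) k * Y i k := by
  have h1 : ∀ i : Fin (2 * M),
      (Umat M ε * X * Yᵀ) i i = ∑ k, (X i k * Y i k + ε * (X (sigF M i) k * Y i k)) := by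
    intro i
    simp only [Matrix.mul_apply, Matrix.transpose_apply]
    refine Finset.sum_congr rfl fun k _ => ?_
    have h2 : (∑ l, Umat M ε i l * X l k) = X i k + ε * X (sigF M i) k := by
      simp only [Umat_apply, add_mul, ite_mul, one_mul, zero_mul]
      rw [Finset.sum_add_distrib]
      congr 1
      · simp [Finset.sum_ite_eq]
      · have h3 : ∀ l, (ε * if l = sigF M i then (1 : ℝ) else 0) * X l k
            = if l = sigF M i then ε * X l k else 0 := by
          intro l; split_ifs <;> ring
        simp only [h3]
        simp [Finset.sum_ite_eq']
    rw [h2]; ring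
  calc Matrix.trace (Umat M ε * X * Yᵀ)
      = ∑ i, ∑ k, (X i k * Y i k + ε * (X (sigF M i) k * Y i k)) := by
        simp only [Matrix.trace, Matrix.diag]
        exact Finset.sum_congr rfl fun i _ => h1 i
    _ = _ := by
        simp only [Finset.sum_add_distrib, ← Finset.mul_sum]
def Gq {m κ : ℕ} (A B C D : Matrix (Fin m) (Fin κ) ℝ) : ℝ :=
  ∑ x : Fin m × Fin κ × Fin κ × Fin κ × Fin κ,
    if (x.2.1 : ℕ) + (x.2.2.1 : ℕ) = (x.2.2.2.1 : ℕ) + (x.2.2.2.2 : ℕ) then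
      A x.1 x.2.1 * B x.1 x.2.2.1 * C x.1 x.2.2.2.1 * D x.1 x.2.2.2.2 else 0

lemma collapse {m κ : ℕ} (A B C D : Matrix (Fin m) (Fin κ) ℝ) (i : Fin m) :
    (∑ k : Fin (2 * κ - 1), rowConv A B i k * rowConv C D i k)
      = ∑ a : Fin κ, ∑ b : Fin κ, ∑ c : Fin κ, ∑ d : Fin κ,
          if (a : ℕ) + (b : ℕ) = (c : ℕ) + (d : ℕ) then
            A i a * B i b * C i c * D i d else 0 := by
  have hk : ∀ (a b c d : Fin κ) (x y : ℝ),
      (∑ k : Fin (2 * κ - 1), (if (a : ℕ) + (b : ℕ) = (k : ℕ) then x else 0)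
        * (if (c : ℕ) + (d : ℕ) = (k : ℕ) then y else 0))
      = if (a : ℕ) + (b : ℕ) = (c : ℕ) + (d : ℕ) then x * y else 0 := by
    intro a b c d x y
    have hab : (a : ℕ) + (b : ℕ) < 2 * κ - 1 := by
      have := a.isLt; have := b.isLt; omega
    rw [Finset.sum_eq_single (⟨(a : ℕ) + (b : ℕ), hab⟩ : Fin (2 * κ - 1))]
    · have hv : (((⟨(a : ℕ) + (b : ℕ), hab⟩ : Fin (2 * κ - 1))) : ℕ) = (a : ℕ) + (b : ℕ) := rfl
      rw [hv, if_pos rfl]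
      split_ifs with h1 h2 h2
      · ring
      · omega
      · omega
      · ring
    · intro k _ hne
      have hnk : ¬((a : ℕ) + (b : ℕ) = (k : ℕ)) := by
        intro h; exact hne (Fin.ext h.symm)
      rw [if_neg hnk, zero_mul]
    · intro h; exact absurd (Finset.mem_univ _) h
  set F : Fin (2 * κ - 1) → Fin κ → Fin κ → Fin κ → Fin κ → ℝ := fun k a b c d =>
    (if (a : ℕ) + (b : ℕ) = (k : ℕ) then A i a * B i b else 0)
      * (if (c : ℕ) + (d : ℕ) = (k : ℕ) then C i c * D i d else 0) with hF
  calc (∑ k : Fin (2 * κ - 1), rowConv A B i k * rowConv C D i k)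
      = ∑ k : Fin (2 * κ - 1), ∑ a, ∑ b, ∑ c, ∑ d, F k a b c d := by
        refine Finset.sum_congr rfl fun k _ => ?_
        rw [rowConv, rowConv, Finset.sum_mul]
        refine Finset.sum_congr rfl fun a _ => ?_
        rw [Finset.sum_mul]
        refine Finset.sum_congr rfl fun b _ => ?_
        rw [Finset.mul_sum]
        refine Finset.sum_congr rfl fun c _ => ?_
        rw [Finset.mul_sum]
    _ = ∑ a, ∑ k : Fin (2 * κ - 1), ∑ b, ∑ c, ∑ d, F k a b c d := Finset.sum_comm
    _ = ∑ a, ∑ b, ∑ k : Fin (2 * κ - 1), ∑ c, ∑ d, F k a b c d :=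
        Finset.sum_congr rfl fun a _ => Finset.sum_comm
    _ = ∑ a, ∑ b, ∑ c, ∑ k : Fin (2 * κ - 1), ∑ d, F k a b c d :=
        Finset.sum_congr rfl fun a _ => Finset.sum_congr rfl fun b _ => Finset.sum_comm
    _ = ∑ a, ∑ b, ∑ c, ∑ d, ∑ k : Fin (2 * κ - 1), F k a b c d :=
        Finset.sum_congr rfl fun a _ => Finset.sum_congr rfl fun b _ =>
          Finset.sum_congr rfl fun c _ => Finset.sum_comm
    _ = _ := Finset.sum_congr rfl fun a _ => Finset.sum_congr rfl fun b _ =>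
          Finset.sum_congr rfl fun c _ => Finset.sum_congr rfl fun d _ =>
            (hk a b c d _ _).trans (by split_ifs <;> ring)

lemma Gq_eq {m κ : ℕ} (A B C D : Matrix (Fin m) (Fin κ) ℝ) :
    (∑ i, ∑ k : Fin (2 * κ - 1), rowConv A B i k * rowConv C D i k) = Gq A B C D := by
  rw [Gq]
  simp only [Fintype.sum_prod_type]
  exact Finset.sum_congr rfl fun i _ => collapse A B C D i
lemma Gq_key {m κ : ℕ} (A B C D A' C' : Matrix (Fin m) (Fin κ) ℝ) (ε δ : ℝ)
    (hA : ∀ i a, A' i a = ε * A i a.rev) (hC : ∀ i c, C' i c = δ * C i c.rev) :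
    Gq A' B C' D = ε * δ * Gq C B A D := by
  rw [Gq, Gq, Finset.mul_sum]
  refine Fintype.sum_equiv
    ⟨fun x => (x.1, x.2.2.2.1.rev, x.2.2.1, x.2.1.rev, x.2.2.2.2),
     fun x => (x.1, x.2.2.2.1.rev, x.2.2.1, x.2.1.rev, x.2.2.2.2), ?_, ?_⟩ _ _ ?_
  · rintro ⟨i, a, b, c, d⟩; simp [Fin.rev_rev]
  · rintro ⟨i, a, b, c, d⟩; simp [Fin.rev_rev]
  · rintro ⟨i, a, b, c, d⟩
    simp only [Equiv.coe_fn_mk]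
    rw [hA, hC]
    have ha := a.isLt; have hc := c.isLt
    simp only [Fin.val_rev]
    split_ifs with h1 h2 h2
    · ring
    · omega
    · omega
    · ring
lemma toMat_symm {M κ : ℕ} (p : Fin (2 * M * κ) → ℝ) (ε : ℝ)
    (hp : ∀ n, p n = ε * p n.rev) (i : Fin (2 * M)) (a : Fin κ) :
    toMat M κ p i a = ε * toMat M κ p (rhoF M i) a.rev := by
  have hi := i.isLt; have ha := a.isLt
  simp only [toMat]
  rw [hp]
  congr 1
  apply congrArg
  apply Fin.ext
  simp only [Fin.val_rev, rhoF]
  have key : 2 * M * κ - ((a : ℕ) * (2 * M) + (i : ℕ) + 1)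
      = (κ - ((a : ℕ) + 1)) * (2 * M) + (2 * M - 1 - (i : ℕ)) := by
    have h1 : ((a : ℕ) + 1) * (2 * M) ≤ κ * (2 * M) :=
      Nat.mul_le_mul_right _ (by omega)
    have h2 : 2 * M * κ = κ * (2 * M) := by ring
    rw [Nat.sub_mul, h2, Nat.add_mul, Nat.one_mul] at *
    generalize hx : (a : ℕ) * (2 * M) = x at *
    generalize hy : κ * (2 * M) = y at *
    omega
  exact key
lemma etaDiff {M κ : ℕ} (P Q R S : Matrix (Fin (2 * M)) (Fin κ) ℝ) :
    etaSign 1 P Q R S - etaSign (-1) P Q R S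
      = (1 / (2 * (M : ℝ))) * 2 *
        (Gq (fun i a => P (sigF M i) a) (fun i b => Q (tauF M i) b) R
            (fun i d => S (rhoF M i) d)
         - Gq (fun i a => P (rhoF M i) a) (fun i b => Q (tauF M i) b)
            (fun i c => R (tauF M i) c) (fun i d => S (rhoF M i) d)) := by
  have hCR : (∑ i, ∑ k, Rcal P Q (sigF M i) k * Rcal R S i k)
      = Gq (fun i a => P (sigF M i) a) (fun i b => Q (tauF M i) b) R
          (fun i d => S (rhoF M i) d) := by
    refine Eq.trans ?_ (Gq_eq _ _ _ _)
    refine Finset.sum_congr rfl fun i _ => Finset.sum_congr rfl fun k _ => ?_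
    congr 1
    · simp only [Rcal, rowConv]
      refine Finset.sum_congr rfl fun a _ => Finset.sum_congr rfl fun b _ => ?_
      rw [Jmat_mul, rho_sig]
    · simp only [Rcal, rowConv]
      refine Finset.sum_congr rfl fun a _ => Finset.sum_congr rfl fun b _ => ?_
      rw [Jmat_mul]
  have hCS : (∑ i, ∑ k, Scal P Q (sigF M i) k * Scal R S i k)
      = Gq (fun i a => P (rhoF M i) a) (fun i b => Q (tauF M i) b)
          (fun i c => R (tauF M i) c) (fun i d => S (rhoF M i) d) := by
    refine Eq.trans ?_ (Gq_eq _ _ _ _)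
    refine Finset.sum_congr rfl fun i _ => Finset.sum_congr rfl fun k _ => ?_
    congr 1
    · simp only [Scal, rowConv]
      refine Finset.sum_congr rfl fun a _ => Finset.sum_congr rfl fun b _ => ?_
      rw [Jmat_mul, swap_mul, rho_sig, tau_sig]
    · simp only [Scal, rowConv]
      refine Finset.sum_congr rfl fun a _ => Finset.sum_congr rfl fun b _ => ?_
      rw [Jmat_mul, swap_mul]
  simp only [etaSign, Matrix.trace_add, trace_Umat]
  rw [hCR, hCS]
  ring
lemma eta_key {M κ : ℕ} (p q r s : Fin (2 * M * κ) → ℝ) (εp εr : ℝ)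
    (hεp : εp = 1 ∨ εp = -1)
    (hp : ∀ n : Fin (2 * M * κ), p n = εp * p n.rev)
    (hr : ∀ n : Fin (2 * M * κ), r n = εr * r n.rev) :
    εp * (etaSign 1 (toMat M κ p) (toMat M κ q) (toMat M κ r) (toMat M κ s)
            - etaSign (-1) (toMat M κ p) (toMat M κ q) (toMat M κ r) (toMat M κ s))
      + εr * (etaSign 1 (toMat M κ r) (toMat M κ q) (toMat M κ p) (toMat M κ s)
            - etaSign (-1) (toMat M κ r) (toMat M κ q) (toMat M κ p) (toMat M κ s)) = 0 := by
  set P := toMat M κ p with hPdef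
  set Q := toMat M κ q with hQdef
  set R := toMat M κ r with hRdef
  set S := toMat M κ s with hSdef
  have hP := toMat_symm p εp hp
  have hR := toMat_symm r εr hr
  have hPσ : ∀ (i : Fin (2 * M)) (a : Fin κ), P (sigF M i) a = εp * P (tauF M i) a.rev := by
    intro i a; rw [← rho_sig i]; exact hP (sigF M i) a
  have hPρ : ∀ (i : Fin (2 * M)) (a : Fin κ), P (rhoF M i) a = εp * P i a.rev := by
    intro i a; have := hP (rhoF M i) a; rwa [rho_rho] at this
  have hRτ : ∀ (i : Fin (2 * M)) (c : Fin κ), R (tauF M i) c = εr * R (sigF M i) c.rev := by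
    intro i c; have := hR (tauF M i) c; rwa [rho_tau] at this
  have e1 := etaDiff P Q R S
  have e2 := etaDiff R Q P S
  have H1 : Gq (fun i a => P (sigF M i) a) (fun i b => Q (tauF M i) b) R
        (fun i d => S (rhoF M i) d)
      = εp * εr * Gq (fun i c => R (rhoF M i) c) (fun i b => Q (tauF M i) b)
        (fun i a => P (tauF M i) a) (fun i d => S (rhoF M i) d) :=
    Gq_key (fun i a => P (tauF M i) a) (fun i b => Q (tauF M i) b)
      (fun i c => R (rhoF M i) c) (fun i d => S (rhoF M i) d)
      (fun i a => P (sigF M i) a) R εp εr (fun i a => hPσ i a) (fun i c => hR i c)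
  have H2 : Gq (fun i a => P (rhoF M i) a) (fun i b => Q (tauF M i) b)
        (fun i c => R (tauF M i) c) (fun i d => S (rhoF M i) d)
      = εp * εr * Gq (fun i c => R (sigF M i) c) (fun i b => Q (tauF M i) b) P
        (fun i d => S (rhoF M i) d) :=
    Gq_key P (fun i b => Q (tauF M i) b)
      (fun i c => R (sigF M i) c) (fun i d => S (rhoF M i) d)
      (fun i a => P (rhoF M i) a) (fun i c => R (tauF M i) c) εp εr
      (fun i a => hPρ i a) (fun i c => hRτ i c)
  have hε2 : εp * εp = 1 := by rcases hεp with h | h <;> rw [h] <;> norm_num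
  linear_combination εp * e1 + εr * e2 + (1 / (2 * (M : ℝ))) * 2 * εp * H1
    - (1 / (2 * (M : ℝ))) * 2 * εp * H2
    + (1 / (2 * (M : ℝ))) * 2 * εr *
      (Gq (fun i c => R (rhoF M i) c) (fun i b => Q (tauF M i) b)
          (fun i a => P (tauF M i) a) (fun i d => S (rhoF M i) d)
        - Gq (fun i c => R (sigF M i) c) (fun i b => Q (tauF M i) b) P
          (fun i d => S (rhoF M i) d)) * hε2

/-- If each of the pulses `p, q, r, s` is either symmetric or anti-symmetric in the time
domain, with sign factors `εp = (−1)^{s(p)}` etc. (`+1` for symmetric, `−1` for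
anti-symmetric), then
`(−1)^{s(p)}[η⁺(p,q,r,s) − η⁻(p,q,r,s)] + (−1)^{s(r)}[η⁺(r,q,p,s) − η⁻(r,q,p,s)] = 0`;
in particular, when `p = r`, `η⁺(p,q,p,s) = η⁻(p,q,p,s)`. -/
theorem etaSign_symmetry_relation {M κ : ℕ}
    (p q r s : Fin (2 * M * κ) → ℝ) (εp εq εr εs : ℝ)
    (hεp : εp = 1 ∨ εp = -1) (hεq : εq = 1 ∨ εq = -1)
    (hεr : εr = 1 ∨ εr = -1) (hεs : εs = 1 ∨ εs = -1)
    (hp : ∀ n : Fin (2 * M * κ), p n = εp * p n.rev)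
    (hq : ∀ n : Fin (2 * M * κ), q n = εq * q n.rev)
    (hr : ∀ n : Fin (2 * M * κ), r n = εr * r n.rev)
    (hs : ∀ n : Fin (2 * M * κ), s n = εs * s n.rev) :
    εp * (etaSign 1 (toMat M κ p) (toMat M κ q) (toMat M κ r) (toMat M κ s)
            - etaSign (-1) (toMat M κ p) (toMat M κ q) (toMat M κ r) (toMat M κ s))
      + εr * (etaSign 1 (toMat M κ r) (toMat M κ q) (toMat M κ p) (toMat M κ s)
            - etaSign (-1) (toMat M κ r) (toMat M κ q) (toMat M κ p) (toMat M κ s)) = 0 ∧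
    (p = r →
      etaSign 1 (toMat M κ p) (toMat M κ q) (toMat M κ r) (toMat M κ s)
        = etaSign (-1) (toMat M κ p) (toMat M κ q) (toMat M κ r) (toMat M κ s)) := by
  constructor
  · exact eta_key p q r s εp εr hεp hp hr
  · intro hpr
    subst hpr
    have h2 := eta_key p q p s εp εp hεp hp hp
    rcases hεp with h | h <;> rw [h] at h2 <;> linarith
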